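/- Every matrix X in the set 𝔤 (as parametrized by α,β,γ,σ ∈ ℂ and δ,ρ ∈ iℝ) satisfies Xᵗ S + S X = 0 and Xᵗ T + T X̄ = 0, where S and T are the stated 5×5 matrices; conversely, every complex 5×5 matrix X satisfying both relations together with tr X = 0 belongs to 𝔤. -/

import Mathlib

open Matrix Complex

noncomputable section

local notation "conj'" => (starRingEnd ℂ)

/-- The set `𝔤` of matrices of the stated shape, with `α,β,γ,σ ∈ ℂ` and `δ,ρ ∈ iℝ`. -/
def gSet : Set (Matrix (Fin 5) (Fin 5) ℂ) :=
  { X | ∃ α β γ σ δ ρ : ℂ, δ.re = 0 ∧ ρ.re = 0 ∧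
      X = !![α, β, γ, δ, 0;
              conj' β, conj' α, conj' γ, 0, -δ;
              σ, conj' σ, 0, -conj' γ, -γ;
              ρ, 0, -conj' σ, -conj' α, -β;
              0, -ρ, -σ, -conj' β, -α] }

def S5 : Matrix (Fin 5) (Fin 5) ℂ :=
  !![0,0,0,0,1; 0,0,0,1,0; 0,0,1,0,0; 0,1,0,0,0; 1,0,0,0,0]

def T5 : Matrix (Fin 5) (Fin 5) ℂ :=
  !![0,0,0,1,0; 0,0,0,0,1; 0,0,1,0,0; 1,0,0,0,0; 0,1,0,0,0]

/-- The order-reversing permutation of `Fin 5` (the one underlying `S5`). -/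
def rev5 : Fin 5 → Fin 5 := ![4,3,2,1,0]

/-- The involutive permutation of `Fin 5` underlying `T5`. -/
def tau5 : Fin 5 → Fin 5 := ![3,4,2,0,1]

lemma S5_mul (X : Matrix (Fin 5) (Fin 5) ℂ) (i j : Fin 5) :
    (S5 * X) i j = X (rev5 i) j := by
  fin_cases i <;> simp [S5, rev5, Matrix.mul_apply, Fin.sum_univ_five]

lemma T5_mul (X : Matrix (Fin 5) (Fin 5) ℂ) (i j : Fin 5) :
    (T5 * X) i j = X (tau5 i) j := by
  fin_cases i <;> simp [T5, tau5, Matrix.mul_apply, Fin.sum_univ_five]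

lemma S5_symm : S5ᵀ = S5 := by ext i j; fin_cases i <;> fin_cases j <;> rfl
lemma T5_symm : T5ᵀ = T5 := by ext i j; fin_cases i <;> fin_cases j <;> rfl

lemma mul_S5 (X : Matrix (Fin 5) (Fin 5) ℂ) (i j : Fin 5) :
    (Xᵀ * S5) i j = X (rev5 j) i := by
  have : Xᵀ * S5 = (S5 * X)ᵀ := by rw [Matrix.transpose_mul, S5_symm]
  rw [this, Matrix.transpose_apply, S5_mul]

lemma mul_T5 (X : Matrix (Fin 5) (Fin 5) ℂ) (i j : Fin 5) :
    (Xᵀ * T5) i j = X (tau5 j) i := by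
  have : Xᵀ * T5 = (T5 * X)ᵀ := by rw [Matrix.transpose_mul, T5_symm]
  rw [this, Matrix.transpose_apply, T5_mul]

theorem stmt3 :
    (∀ X ∈ gSet, Xᵀ * S5 + S5 * X = 0 ∧ Xᵀ * T5 + T5 * X.map conj' = 0) ∧
    (∀ X : Matrix (Fin 5) (Fin 5) ℂ,
      Xᵀ * S5 + S5 * X = 0 → Xᵀ * T5 + T5 * X.map conj' = 0 → X.trace = 0 → X ∈ gSet) := by
  constructor
  · rintro X ⟨α, β, γ, σ, δ, ρ, hδ, hρ, rfl⟩
    have hd : conj' δ = -δ := by rw [Complex.ext_iff]; simp [hδ]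
    have hr : conj' ρ = -ρ := by rw [Complex.ext_iff]; simp [hρ]
    constructor
    · ext i j
      rw [Matrix.add_apply, mul_S5, S5_mul, Matrix.zero_apply]
      fin_cases i <;> fin_cases j <;> simp [rev5]
    · ext i j
      rw [Matrix.add_apply, mul_T5, T5_mul, Matrix.zero_apply, Matrix.map_apply]
      fin_cases i <;> fin_cases j <;> simp [tau5, hd, hr]
  · intro X h1 h2 _
    have eS : ∀ i j : Fin 5, X (rev5 j) i + X (rev5 i) j = 0 := fun i j => by
      have h := congrFun (congrFun h1 i) j
      rwa [Matrix.add_apply, mul_S5, S5_mul, Matrix.zero_apply] at h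
    have eT : ∀ i j : Fin 5, X (tau5 j) i + conj' (X (tau5 i) j) = 0 := fun i j => by
      have h := congrFun (congrFun h2 i) j
      rwa [Matrix.add_apply, mul_T5, T5_mul, Matrix.zero_apply, Matrix.map_apply] at h
    have eSc : ∀ i j : Fin 5, conj' (X (rev5 j) i) + conj' (X (rev5 i) j) = 0 := fun i j => by
      rw [← map_add, eS, map_zero]
    refine ⟨X 0 0, X 0 1, X 0 2, X 2 0, X 0 3, X 3 0, ?_, ?_, ?_⟩
    · have h := eT 3 3; simp only [tau5] at h; norm_num at h
      have h' := congrArg Complex.re h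
      simp at h'
      linarith
    · have h := eT 0 0; simp only [tau5] at h; norm_num at h
      have h' := congrArg Complex.re h
      simp at h'
      linarith
    · ext i j
      fin_cases i <;> fin_cases j <;> simp
      · -- 0,4
        have h := eS 4 4; simp [rev5] at h; linear_combination h
      · -- 1,0
        have hT := eT 0 4; have hSc := eSc 1 4
        simp [rev5, tau5] at hT hSc; linear_combination hT - hSc
      · -- 1,1
        have hT := eT 1 4; have hSc := eSc 0 4
        simp [rev5, tau5] at hT hSc; linear_combination hT - hSc
      · -- 1,2
        have hT := eT 2 4; have hSc := eSc 2 4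
        simp [rev5, tau5] at hT hSc; linear_combination hT - hSc
      · -- 1,3
        have h := eS 3 3; simp [rev5] at h; linear_combination h
      · -- 1,4
        have h := eS 3 4; simp [rev5] at h; linear_combination h
      · -- 2,1
        have hT := eT 1 2; have hSc := eSc 0 2
        simp [rev5, tau5] at hT hSc; linear_combination hT - hSc
      · -- 2,2
        have h := eS 2 2; simp [rev5] at h; linear_combination h
      · -- 2,3
        have h := eT 3 2; simp [tau5] at h; linear_combination h
      · -- 2,4
        have h := eS 2 4; simp [rev5] at h; linear_combination h
      · -- 3,1
        have h := eS 1 1; simp [rev5] at h; linear_combination h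
      · -- 3,2
        have h := eT 2 0; simp [tau5] at h; linear_combination h
      · -- 3,3
        have h := eT 3 0; simp [tau5] at h; linear_combination h
      · -- 3,4
        have h := eS 1 4; simp [rev5] at h; linear_combination h
      · -- 4,0
        have h := eS 0 0; simp [rev5] at h; linear_combination h
      · -- 4,1
        have h := eS 0 1; simp [rev5] at h; linear_combination h
      · -- 4,2
        have h := eS 0 2; simp [rev5] at h; linear_combination h
      · -- 4,3
        have h := eT 3 1; simp [tau5] at h; linear_combination h
      · -- 4,4
        have h := eS 0 4; simp [rev5] at h; linear_combination h
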